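/- arXiv:1404.1963 — 2 statements merged into one kernel-verified Lean document; each statement's English description precedes it below -/
import Mathlib

section
/- The secular function h(t) = Σᵢ 4ψᵢ²/(t − 2ν + 2αᵢ)² − t is strictly decreasing on (2ν − 2α₁, ∞), and hence has at most one root there; consequently g has at most one critical point w with ‖w‖² > 2ν − 2α₁. -/
open Finset

lemma stmt18_aux {n : ℕ} (hn : 1 ≤ n) (α ψ : Fin n → ℝ) (hα : Monotone α) (ν : ℝ)
    (h : ℝ → ℝ)
    (hh : ∀ t, h t = (∑ i, 4 * (ψ i)^2 / (t - 2 * ν + 2 * α i)^2) - t)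
    (w : Fin n → ℝ)
    (hw : ∀ i, ((1/2) * ∑ j, (w j)^2 - ν) * w i + α i * w i = ψ i)
    (hs : 2 * ν - 2 * α ⟨0, hn⟩ < ∑ j, (w j)^2) :
    h (∑ j, (w j)^2) = 0 ∧
    ∀ i, w i = ψ i / ((1/2) * ∑ j, (w j)^2 - ν + α i) := by
  set s := ∑ j, (w j)^2 with hsdef
  have hpos : ∀ i : Fin n, 0 < (1/2) * s - ν + α i := by
    intro i
    have h0 : (⟨0, hn⟩ : Fin n) ≤ i := Fin.mk_le_of_le_val (Nat.zero_le _)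
    have := hα h0
    nlinarith [hs]
  have hwi : ∀ i, w i = ψ i / ((1/2) * s - ν + α i) := by
    intro i
    rw [eq_div_iff (hpos i).ne']
    linear_combination hw i
  refine ⟨?_, hwi⟩
  rw [hh]
  have : ∀ i : Fin n, 4 * (ψ i)^2 / (s - 2 * ν + 2 * α i)^2 = (w i)^2 := by
    intro i
    rw [hwi i, div_pow]
    have hne : ((1/2) * s - ν + α i) ≠ 0 := (hpos i).ne'
    have : s - 2 * ν + 2 * α i = 2 * ((1/2) * s - ν + α i) := by ring
    rw [this]
    field_simp
    ring
  rw [Finset.sum_congr rfl (fun i _ => this i)]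
  simp [hsdef]

theorem stmt18 {n : ℕ} (hn : 1 ≤ n) (α ψ : Fin n → ℝ) (hα : Monotone α) (ν : ℝ)
    (g : (Fin n → ℝ) → ℝ)
    (hg : ∀ w, g w = (1/2) * ((1/2) * ∑ i, (w i)^2 - ν)^2
        + (1/2) * ∑ i, α i * (w i)^2 - ∑ i, ψ i * w i)
    (h : ℝ → ℝ)
    (hh : ∀ t, h t = (∑ i, 4 * (ψ i)^2 / (t - 2 * ν + 2 * α i)^2) - t) :
    StrictAntiOn h (Set.Ioi (2 * ν - 2 * α ⟨0, hn⟩)) ∧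
    (∀ t₁ ∈ Set.Ioi (2 * ν - 2 * α ⟨0, hn⟩), ∀ t₂ ∈ Set.Ioi (2 * ν - 2 * α ⟨0, hn⟩),
      h t₁ = 0 → h t₂ = 0 → t₁ = t₂) ∧
    (∀ w w' : Fin n → ℝ,
      (∀ i, ((1/2) * ∑ j, (w j)^2 - ν) * w i + α i * w i = ψ i) →
      (∀ i, ((1/2) * ∑ j, (w' j)^2 - ν) * w' i + α i * w' i = ψ i) →
      2 * ν - 2 * α ⟨0, hn⟩ < ∑ j, (w j)^2 →
      2 * ν - 2 * α ⟨0, hn⟩ < ∑ j, (w' j)^2 →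
      w = w') := by
  have hanti : StrictAntiOn h (Set.Ioi (2 * ν - 2 * α ⟨0, hn⟩)) := by
    intro x hx y hy hxy
    simp only [Set.mem_Ioi] at hx hy
    rw [hh, hh]
    have hsum : (∑ i, 4 * (ψ i)^2 / (y - 2 * ν + 2 * α i)^2)
        ≤ ∑ i, 4 * (ψ i)^2 / (x - 2 * ν + 2 * α i)^2 := by
      apply Finset.sum_le_sum
      intro i _
      have h0 : (⟨0, hn⟩ : Fin n) ≤ i := Fin.mk_le_of_le_val (Nat.zero_le _)
      have hαi := hα h0
      have hxpos : 0 < x - 2 * ν + 2 * α i := by linarith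
      have hypos : 0 < y - 2 * ν + 2 * α i := by linarith
      gcongr
      <;> nlinarith
    linarith
  refine ⟨hanti, fun t₁ ht₁ t₂ ht₂ h1 h2 => ?_, ?_⟩
  · rcases lt_trichotomy t₁ t₂ with hlt | heq | hgt
    · exact absurd (hanti ht₁ ht₂ hlt) (by rw [h1, h2]; simp)
    · exact heq
    · exact absurd (hanti ht₂ ht₁ hgt) (by rw [h1, h2]; simp)
  · intro w w' hw hw' hs hs'
    obtain ⟨hz, hwi⟩ := stmt18_aux hn α ψ hα ν h hh w hw hs
    obtain ⟨hz', hwi'⟩ := stmt18_aux hn α ψ hα ν h hh w' hw' hs'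
    have hseq : (∑ j, (w j)^2) = ∑ j, (w' j)^2 := by
      rcases lt_trichotomy (∑ j, (w j)^2) (∑ j, (w' j)^2) with hlt | heq | hgt
      · exact absurd (hanti hs hs' hlt) (by rw [hz, hz']; simp)
      · exact heq
      · exact absurd (hanti hs' hs hgt) (by rw [hz, hz']; simp)
    funext i
    rw [hwi i, hwi' i, hseq]
end

section
/- For the one-dimensional function g(w) = (1/2)((1/2)w² − ν)² + (α/2)w² − ψw with ψ ≠ 0: if t₁ = w̲² and t₂ = w̄² are squares of a local minimizer w̲ and a local maximizer w̄ respectively, both being roots of h(t) = 4ψ²/(t − 2ν + 2α)² − t with h'(t₁) ≥ 0 and h'(t₂) ≤ 0, then w̄² < w̲². -/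
/-- Auxiliary: if `g` is our quartic, `w ≠ 0` is a critical point with
`3 w^2 ≥ 2ν - 2a`, then `w` is not a local maximum. -/
lemma stmt19_no_max (ν a ψ : ℝ) (g : ℝ → ℝ)
    (hg : ∀ w, g w = (1/2) * ((1/2) * w^2 - ν)^2 + (a/2) * w^2 - ψ * w)
    (w : ℝ) (hw : w ≠ 0)
    (hcrit : ψ = w * ((1/2) * w^2 - ν + a))
    (hc : 2 * ν - 2 * a ≤ 3 * w^2) : ¬ IsLocalMax g w := by
  intro hmax
  obtain ⟨ε, hε, hb⟩ := Metric.eventually_nhds_iff.mp hmax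
  set δ : ℝ := (if 0 < w then 1 else -1) * (ε/2) with hδ
  have hwδ : 0 < w * δ := by
    rw [hδ]; split_ifs with h'
    · rw [one_mul]; exact mul_pos h' (half_pos hε)
    · have hneg : w < 0 := lt_of_le_of_ne (not_lt.mp h') hw
      have := mul_pos (neg_pos.mpr hneg) (half_pos hε)
      nlinarith [this]
  have hdist : dist (w + δ) w < ε := by
    have habs : |δ| = ε/2 := by
      rw [hδ]; split_ifs with h'
      · rw [one_mul, abs_of_pos (half_pos hε)]
      · rw [neg_one_mul, abs_neg, abs_of_pos (half_pos hε)]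
    rw [Real.dist_eq]
    simp only [add_sub_cancel_left]
    rw [habs]; linarith
  have hle := hb hdist
  have key : g (w + δ) - g w
      = δ^2 * (((w+δ)^2 + 2*w*(w+δ) + 3*w^2 - 2*(2*ν-2*a))/8) := by
    rw [hg, hg]
    linear_combination (-δ) * hcrit
  have hδ0 : δ ≠ 0 := by
    intro h0; rw [h0, mul_zero] at hwδ; exact lt_irrefl 0 hwδ
  have hqpos : 0 < ((w+δ)^2 + 2*w*(w+δ) + 3*w^2 - 2*(2*ν-2*a))/8 := by
    nlinarith [sq_nonneg δ]
  have : 0 < g (w + δ) - g w := by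
    rw [key]
    positivity
  linarith

theorem stmt19 (ν a ψ : ℝ) (hψ : ψ ≠ 0)
    (g : ℝ → ℝ)
    (hg : ∀ w, g w = (1/2) * ((1/2) * w^2 - ν)^2 + (a/2) * w^2 - ψ * w)
    (h : ℝ → ℝ)
    (hh : ∀ t, h t = 4 * ψ^2 / (t - 2 * ν + 2 * a)^2 - t)
    (wl wm : ℝ) (hl : IsLocalMin g wl) (hm : IsLocalMax g wm)
    (ht1 : h (wl^2) = 0) (ht2 : h (wm^2) = 0)
    (hd1 : 0 ≤ deriv h (wl^2)) (hd2 : deriv h (wm^2) ≤ 0) :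
    wm^2 < wl^2 := by
  have hgf : g = fun w => (1/2) * ((1/2) * w^2 - ν)^2 + (a/2) * w^2 - ψ * w := funext hg
  -- derivative of g
  have hderivg : ∀ w : ℝ, HasDerivAt g ((1/2)*w^3 - (ν - a)*w - ψ) w := by
    intro w
    rw [hgf]
    have h1 := ((((((hasDerivAt_id w).pow 2).const_mul (1/2 : ℝ)).sub_const ν).pow 2).const_mul
        (1/2 : ℝ)).add (((hasDerivAt_id w).pow 2).const_mul (a/2 : ℝ)) |>.sub
        ((hasDerivAt_id w).const_mul ψ)
    refine h1.congr_deriv ?_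
    simp only [id_eq, Pi.pow_apply]
    push_cast
    ring
  -- critical point equations
  have hcl : ψ = wl * ((1/2) * wl^2 - ν + a) := by
    have h2 := (hderivg wl).deriv
    rw [hl.deriv_eq_zero] at h2
    nlinarith [h2]
  have hcm : ψ = wm * ((1/2) * wm^2 - ν + a) := by
    have h2 := (hderivg wm).deriv
    rw [hm.deriv_eq_zero] at h2
    nlinarith [h2]
  have hwl : wl ≠ 0 := by
    intro h0; apply hψ; rw [hcl, h0, zero_mul]
  have hwm : wm ≠ 0 := by
    intro h0; apply hψ; rw [hcm, h0, zero_mul]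
  -- the local max gives 3 wm^2 < 2ν - 2a
  have hmax : 3 * wm^2 < 2 * ν - 2 * a := by
    by_contra hcon
    exact stmt19_no_max ν a ψ g hg wm hwm hcm (not_lt.mp hcon) hm
  -- now use hd1 to get 2ν - 2a ≤ 3 wl^2
  set d : ℝ := wl^2 - 2*ν + 2*a with hd
  have h2ψ : wl * d = 2 * ψ := by rw [hd]; linear_combination (-2) * hcl
  have hd0 : d ≠ 0 := by
    intro h0
    apply hψ
    rw [h0, mul_zero] at h2ψ
    linarith
  have hhf : h = fun t => 4 * ψ^2 / (t - 2 * ν + 2 * a)^2 - t := funext hh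
  have hderivh : HasDerivAt h (4 * ψ^2 * (-(2 * d * 1) / ((d^2)^2)) - 1) (wl^2) := by
    rw [hhf]
    simp only [div_eq_mul_inv]
    have h2 : HasDerivAt (fun t : ℝ => t - 2*ν + 2*a) 1 (wl^2) := by
      simpa using ((hasDerivAt_id (wl^2)).sub_const (2*ν)).add_const (2*a)
    have h3 : HasDerivAt (fun t : ℝ => (t - 2*ν + 2*a)^2)
        ((2:ℕ) * (wl^2 - 2*ν + 2*a)^(2-1) * 1) (wl^2) := h2.pow 2
    have h4 : HasDerivAt (fun t : ℝ => ((t - 2*ν + 2*a)^2)⁻¹)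
        (-((2:ℕ) * (wl^2 - 2*ν + 2*a)^(2-1) * 1) / (((wl^2 - 2*ν + 2*a)^2)^2)) (wl^2) := by
      apply h3.inv
      exact pow_ne_zero 2 hd0
    have h5 := (h4.const_mul (4*ψ^2)).sub (hasDerivAt_id (wl^2))
    refine h5.congr_deriv ?_
    rw [hd]
    push_cast
    ring
  rw [hderivh.deriv] at hd1
  have hψsq : 0 < ψ^2 := by positivity
  have hkey : (d^2)^2 ≤ 4 * ψ^2 * (-(2 * d)) := by
    have hpos : (0:ℝ) < (d^2)^2 := by positivity
    have h6 : 1 ≤ 4 * ψ^2 * (-(2 * d * 1) / ((d^2)^2)) := by linarith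
    rw [← mul_div_assoc] at h6
    rw [le_div_iff₀ hpos] at h6
    linarith [h6]
  have hψ2 : 4 * ψ^2 = wl^2 * d^2 := by linear_combination (-(wl*d + 2*ψ)) * h2ψ
  have hdneg : d < 0 := by
    rcases lt_or_gt_of_ne hd0 with h' | h'
    · exact h'
    · exfalso
      nlinarith [hkey, hψsq, mul_pos hψsq h', pow_pos h' 4]
  have hnd : 0 < -d := neg_pos.mpr hdneg
  have hkey2 : (d^2)^2 ≤ wl^2 * d^2 * (-(2 * d)) := by
    calc (d^2)^2 ≤ 4 * ψ^2 * (-(2 * d)) := hkey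
    _ = wl^2 * d^2 * (-(2 * d)) := by rw [hψ2]
  have hfin : 2 * ν - 2 * a ≤ 3 * wl^2 := by
    nlinarith [hkey2, hd, mul_pos (mul_pos hnd hnd) hnd]
  linarith [hmax, hfin]
end
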